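/- In the non-idempotent intersection type system R (with a nullary application rule allowed), every head-normalizable λ-term is typable; conversely every typable term is head-normalizable. -/

import Mathlib

/-- Untyped λ-terms with de Bruijn indices. -/
inductive Tm : Type
  | var : ℕ → Tm
  | app : Tm → Tm → Tm
  | lam : Tm → Tm

namespace Tm

/-- Lift (shift by `d`) the free variables of index `≥ k`. -/
def lift (d : ℕ) : ℕ → Tm → Tm
  | k, .var m => if m < k then .var m else .var (m + d)
  | k, .app a b => .app (lift d k a) (lift d k b)
  | k, .lam a => .lam (lift d (k + 1) a)

/-- Capture-avoiding substitution of `s` for the variable of index `k`. -/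
def subst (s : Tm) : ℕ → Tm → Tm
  | k, .var m => if m < k then .var m else if m = k then lift k 0 s else .var (m - 1)
  | k, .app a b => .app (subst s k a) (subst s k b)
  | k, .lam a => .lam (subst s (k + 1) a)

end Tm

/-- One step of β-reduction (anywhere in the term). -/
inductive Beta : Tm → Tm → Prop
  | beta (t u : Tm) : Beta (.app (.lam t) u) (Tm.subst u 0 t)
  | appL {a a' : Tm} (b : Tm) : Beta a a' → Beta (.app a b) (.app a' b)
  | appR (a : Tm) {b b' : Tm} : Beta b b' → Beta (.app a b) (.app a b')
  | lam {a a' : Tm} : Beta a a' → Beta (.lam a) (.lam a')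

/-- Non-idempotent intersection types: `α ::= γ | [α₁,…,αₙ] → α`, where `γ`
ranges over a set `A` of type atoms and a finite multiset of types is
represented by a list of types. -/
inductive Ty (A : Type) : Type
  | atom : A → Ty A
  | arrow : List (Ty A) → Ty A → Ty A

/-- Environments map (de Bruijn) variables to finite multisets of types. -/
abbrev Env (A : Type) := ℕ → Multiset (Ty A)

/-- Extend an environment with a multiset of types for the freshly bound
variable `0`. -/
def consEnv {A : Type} (a : Multiset (Ty A)) (Γ : Env A) : Env A
  | 0 => a
  | m + 1 => Γ m

/-- Pointwise sum of an environment and a list of environments. -/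
def sumEnv {A : Type} (Γ₀ : Env A) (Γs : List (Env A)) : Env A :=
  fun m => Γ₀ m + (Γs.map fun Γ => Γ m).sum

/-- The typing judgements of System R: as R^ex except that the `var` rule
requires `x : [α]` and empty multisets on the other variables, and the `app`
rule allows `n = 0` typings of the argument. -/
inductive TypingR (A : Type) : Env A → Tm → Ty A → Prop
  | var (x : ℕ) (α : Ty A) :
      TypingR A (fun m => if m = x then {α} else 0) (.var x) α
  | abs {Γ : Env A} {a : List (Ty A)} {t : Tm} {α : Ty A}
      (h : TypingR A (consEnv (↑a) Γ) t α) :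
      TypingR A Γ (.lam t) (.arrow a α)
  | app {Γ₀ : Env A} {Γs : List (Env A)} {v u : Tm} {as : List (Ty A)} {α : Ty A}
      (hv : TypingR A Γ₀ v (.arrow as α))
      (hlen : Γs.length = as.length)
      (hu : ∀ i (hi : i < as.length) (hj : i < Γs.length),
        TypingR A (Γs.get ⟨i, hj⟩) u (as.get ⟨i, hi⟩)) :
      TypingR A (sumEnv Γ₀ Γs) (.app v u) α

/-- `headVar t`: `t` is a variable applied to a (possibly empty) sequence of
arguments. -/
def headVar : Tm → Prop
  | .var _ => True
  | .app a _ => headVar a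
  | .lam _ => False

/-- Head normal forms: `λx₁…x_k. y t₁ … t_m`. -/
def isHNF : Tm → Prop
  | .var _ => True
  | .app a _ => headVar a
  | .lam t => isHNF t


section Aux
variable {A : Type}

/-- Shift an environment: insert `d` empty slots at position `k`. -/
def liftEnv (d k : ℕ) (Γ : Env A) : Env A :=
  fun m => if m < k then Γ m else if m < k + d then 0 else Γ (m - d)

/-- Drop position `k` from an environment. -/
def dropEnv (k : ℕ) (Γ : Env A) : Env A :=
  fun m => if m < k then Γ m else Γ (m + 1)

/-- Insert a multiset at position `k`. -/
def insEnv (k : ℕ) (a : Multiset (Ty A)) (Γ : Env A) : Env A :=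
  fun m => if m < k then Γ m else if m = k then a else Γ (m - 1)

/-- Type-valued derivations mirroring `TypingR`. -/
inductive Deriv (A : Type) : Env A → Tm → Ty A → Type
  | var (x : ℕ) (α : Ty A) :
      Deriv A (fun m => if m = x then {α} else 0) (.var x) α
  | abs {Γ : Env A} {a : List (Ty A)} {t : Tm} {α : Ty A}
      (h : Deriv A (consEnv (↑a) Γ) t α) :
      Deriv A Γ (.lam t) (.arrow a α)
  | app {Γ₀ : Env A} {Γs : List (Env A)} {v u : Tm} {as : List (Ty A)} {α : Ty A}
      (hv : Deriv A Γ₀ v (.arrow as α))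
      (hlen : Γs.length = as.length)
      (hu : ∀ i (hi : i < as.length) (hj : i < Γs.length),
        Deriv A (Γs.get ⟨i, hj⟩) u (as.get ⟨i, hi⟩)) :
      Deriv A (sumEnv Γ₀ Γs) (.app v u) α

namespace Deriv

def size : {Γ : Env A} → {t : Tm} → {α : Ty A} → Deriv A Γ t α → ℕ
  | _, _, _, .var _ _ => 1
  | _, _, _, .abs h => size h + 1
  | _, _, _, @Deriv.app _ _ Γs _ _ as _ hv hlen hu =>
      size hv + ((List.ofFn fun i : Fin as.length =>
        size (hu i i.isLt (lt_of_lt_of_eq i.isLt hlen.symm))).sum) + 1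

def cast {Γ Γ' : Env A} {t : Tm} {α : Ty A} (h : Γ = Γ') (d : Deriv A Γ t α) :
    Deriv A Γ' t α := Eq.ndrec (motive := fun Δ => Deriv A Δ t α) d h

@[simp] lemma size_cast {Γ Γ' : Env A} {t : Tm} {α : Ty A} (h : Γ = Γ')
    (d : Deriv A Γ t α) : (d.cast h).size = d.size := by subst h; rfl

end Deriv

lemma deriv_of_typing {Γ : Env A} {t : Tm} {α : Ty A} (h : TypingR A Γ t α) :
    Nonempty (Deriv A Γ t α) := by
  induction h with
  | var x α => exact ⟨.var x α⟩
  | abs _ ih => exact ⟨.abs ih.some⟩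
  | app hv hlen hu ihv ihu =>
      exact ⟨.app ihv.some hlen (fun i hi hj => (ihu i hi hj).some)⟩

lemma typing_of_deriv {Γ : Env A} {t : Tm} {α : Ty A} (d : Deriv A Γ t α) :
    TypingR A Γ t α := by
  induction d with
  | var x α => exact .var x α
  | abs _ ih => exact .abs ih
  | app _ hlen _ ihv ihu => exact .app ihv hlen ihu

end Aux

section Aux2
variable {A : Type}

def singleEnv (x : ℕ) (α : Ty A) : Env A := fun m => if m = x then {α} else 0

lemma liftEnv_consEnv (δ k : ℕ) (a : Multiset (Ty A)) (Γ : Env A) :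
    liftEnv δ (k+1) (consEnv a Γ) = consEnv a (liftEnv δ k Γ) := by
  funext m
  cases m with
  | zero => simp [liftEnv, consEnv]
  | succ m =>
      simp only [liftEnv, consEnv]
      by_cases h1 : m < k
      · rw [if_pos (by omega), if_pos h1]
      · rw [if_neg (by omega), if_neg h1]
        by_cases h2 : m < k + δ
        · rw [if_pos (by omega), if_pos h2]
        · rw [if_neg (by omega), if_neg h2]
          have : m + 1 - δ = (m - δ) + 1 := by omega
          rw [this]

lemma liftEnv_single_lt {x k : ℕ} (δ : ℕ) (α : Ty A) (h : x < k) :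
    liftEnv δ k (singleEnv x α) = singleEnv x α := by
  funext m
  simp only [liftEnv, singleEnv]
  by_cases h1 : m < k
  · rw [if_pos h1]
  · rw [if_neg h1]
    by_cases h2 : m < k + δ
    · rw [if_pos h2, if_neg (by omega)]
    · rw [if_neg h2, if_neg (by omega), if_neg (by omega)]

lemma liftEnv_single_ge {x k : ℕ} (δ : ℕ) (α : Ty A) (h : ¬ x < k) :
    liftEnv δ k (singleEnv x α) = singleEnv (x + δ) α := by
  funext m
  simp only [liftEnv, singleEnv]
  by_cases h1 : m < k
  · rw [if_pos h1, if_neg (by omega), if_neg (by omega)]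
  · rw [if_neg h1]
    by_cases h2 : m < k + δ
    · rw [if_pos h2, if_neg (by omega)]
    · rw [if_neg h2]
      by_cases h3 : m - δ = x
      · rw [if_pos h3, if_pos (by omega)]
      · rw [if_neg h3, if_neg (by omega)]

lemma liftEnv_sumEnv (δ k : ℕ) (Γ₀ : Env A) (Γs : List (Env A)) :
    liftEnv δ k (sumEnv Γ₀ Γs) = sumEnv (liftEnv δ k Γ₀) (Γs.map (liftEnv δ k)) := by
  funext m
  simp only [sumEnv, liftEnv, List.map_map, Function.comp_def]
  by_cases h1 : m < k
  · simp only [if_pos h1]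
  · by_cases h2 : m < k + δ
    · simp only [if_neg h1, if_pos h2]
      simp
    · simp only [if_neg h1, if_neg h2]

/-- Lifting preserves typing (derivation-level, size-preserving). -/
lemma Deriv.lift_deriv {Γ : Env A} {t : Tm} {α : Ty A} (d : Deriv A Γ t α) (δ : ℕ) :
    ∀ k, ∃ d' : Deriv A (liftEnv δ k Γ) (Tm.lift δ k t) α, d'.size = d.size := by
  induction d with
  | var x β =>
      intro k
      by_cases h : x < k
      · rw [show Tm.lift δ k (.var x) = .var x by simp [Tm.lift, h]]
        exact ⟨(Deriv.var x β).cast (liftEnv_single_lt δ β h).symm, by exact Deriv.size_cast _ _⟩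
      · rw [show Tm.lift δ k (.var x) = .var (x + δ) by simp [Tm.lift, h]]
        exact ⟨(Deriv.var (x + δ) β).cast (liftEnv_single_ge δ β h).symm,
          by exact Deriv.size_cast _ _⟩
  | abs h ih =>
      intro k
      obtain ⟨d', hd'⟩ := ih (k+1)
      exact ⟨Deriv.abs (d'.cast (liftEnv_consEnv δ k _ _)),
        by simp [Deriv.size, hd']⟩
  | @app Γ₀ Γs v u as β hv hlen hu ihv ihu =>
      intro k
      obtain ⟨dv, hdv⟩ := ihv k
      choose du hdu using fun i hi hj => ihu i hi hj k
      have hlen' : (Γs.map (liftEnv δ k)).length = as.length := by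
        simpa using hlen
      refine ⟨(Deriv.app dv hlen' (fun i hi hj => ((du i hi (by simpa using hj)).cast
        (by simp [List.get_eq_getElem, List.getElem_map])))).cast
        (liftEnv_sumEnv δ k Γ₀ Γs).symm, ?_⟩
      erw [Deriv.size_cast]
      simp [Deriv.size, hdv, hdu]
end Aux2

section Aux3
variable {A : Type}

/-- Argument derivations: an environment/type pair together with a derivation. -/
abbrev AD (A : Type) (s : Tm) := Σ p : Env A × Ty A, Deriv A p.1 s p.2

def adty {s : Tm} (x : AD A s) : Ty A := x.1.2

def argEnv (k : ℕ) {s : Tm} (D : Multiset (AD A s)) : Env A :=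
  fun m => (D.map fun x => liftEnv k 0 x.1.1 m).sum

def argSize {s : Tm} (D : Multiset (AD A s)) : ℕ :=
  (D.map fun x => x.2.size).sum

def Deriv.castTy {Γ : Env A} {t : Tm} {α α' : Ty A} (h : α = α') (d : Deriv A Γ t α) :
    Deriv A Γ t α' := Eq.ndrec (motive := fun β => Deriv A Γ t β) d h

@[simp] lemma Deriv.size_castTy {Γ : Env A} {t : Tm} {α α' : Ty A} (h : α = α')
    (d : Deriv A Γ t α) : (d.castTy h).size = d.size := by subst h; rfl

lemma multiset_split2 {β γ : Type _} (f : β → γ) :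
    ∀ (a b : Multiset γ) (D : Multiset β), D.map f = a + b →
      ∃ D₁ D₂, D = D₁ + D₂ ∧ D₁.map f = a ∧ D₂.map f = b := by
  intro a
  induction a using Multiset.induction with
  | empty => intro b D h; exact ⟨0, D, by simp, by simp, by simpa using h⟩
  | cons x a ih =>
      intro b D h
      have hx : x ∈ D.map f := by rw [h]; simp
      obtain ⟨y, hy, hfy⟩ := Multiset.mem_map.mp hx
      obtain ⟨D', hD⟩ := Multiset.exists_cons_of_mem hy
      have h2 : D'.map f = a + b := by
        have hh : x ::ₘ D'.map f = x ::ₘ (a + b) := by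
          rw [← hfy, ← Multiset.map_cons, ← hD, h, hfy, Multiset.cons_add]
        exact (Multiset.cons_inj_right x).mp hh
      obtain ⟨D₁, D₂, hsum, h1, h2'⟩ := ih b D' h2
      exact ⟨y ::ₘ D₁, D₂, by rw [hD, hsum, Multiset.cons_add],
        by rw [Multiset.map_cons, hfy, h1], h2'⟩

lemma multiset_splitList {β γ : Type _} (f : β → γ) :
    ∀ (Ms : List (Multiset γ)) (D : Multiset β), D.map f = Ms.sum →
      ∃ Ds : List (Multiset β), Ds.length = Ms.length ∧ Ds.sum = D ∧
        ∀ i (h : i < Ms.length) (h' : i < Ds.length),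
          (Ds.get ⟨i, h'⟩).map f = Ms.get ⟨i, h⟩ := by
  intro Ms
  induction Ms with
  | nil =>
      intro D h
      refine ⟨[], rfl, ?_, fun i h h' => absurd h' (by simp)⟩
      have h0 : D.map f = 0 := by simpa using h
      have : D = 0 := Multiset.map_eq_zero.mp h0
      simp [this]
  | cons M Ms ih =>
      intro D h
      obtain ⟨D₁, D₂, hsum, h1, h2⟩ := multiset_split2 f M Ms.sum D (by simpa using h)
      obtain ⟨Ds, hlen, hs, hget⟩ := ih D₂ h2
      refine ⟨D₁ :: Ds, by simp [hlen], by simp [hs, ← hsum], ?_⟩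
      intro i hi hi'
      cases i with
      | zero => simpa using h1
      | succ i => simpa using hget i (by simpa using hi) (by simpa using hi')

lemma msum_map {β : Type _} {M : Type _} [AddCommMonoid M] (g : β → M) :
    ∀ (Ds : List (Multiset β)),
      ((Ds.sum).map g).sum = (Ds.map fun Di => (Di.map g).sum).sum := by
  intro Ds
  induction Ds with
  | nil => simp
  | cons D Ds ih => simp [Multiset.map_add, ih]

lemma list_sum_fin {M : Type _} [AddCommMonoid M] (l : List M) {n : ℕ} (h : l.length = n) :
    l.sum = ∑ i : Fin n, l.get ⟨i, lt_of_lt_of_eq i.isLt h.symm⟩ := by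
  subst h
  conv_lhs => rw [← List.ofFn_get l]
  rw [List.sum_ofFn]

lemma zip_sum {s : Tm} (k : ℕ) :
    ∀ (Γs : List (Env A)) (Ds : List (Multiset (AD A s))), Γs.length = Ds.length → ∀ m,
      ((List.zipWith (fun Γi Di => fun m => dropEnv k Γi m + argEnv k Di m) Γs Ds).map
          (fun Γ => Γ m)).sum =
        (Γs.map fun Γi => dropEnv k Γi m).sum + (Ds.map fun Di => argEnv k Di m).sum := by
  intro Γs
  induction Γs with
  | nil =>
      intro Ds h m
      have : Ds = [] := by simpa using h.symm
      simp [this]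
  | cons Γi Γs ih =>
      intro Ds h m
      cases Ds with
      | nil => simp at h
      | cons Di Ds =>
          simp only [List.zipWith_cons_cons, List.map_cons, List.sum_cons]
          rw [ih Ds (by simpa using h) m]
          abel

end Aux3

section Aux4
set_option maxHeartbeats 1000000 in
example : True := trivial
set_option maxHeartbeats 1000000
variable {A : Type}

lemma subst_deriv {s : Tm} {Γ : Env A} {t : Tm} {α : Ty A} (d : Deriv A Γ t α) :
    ∀ (k : ℕ) (D : Multiset (AD A s)), D.map (fun x => x.1.2) = Γ k →
    ∃ d' : Deriv A (fun m => dropEnv k Γ m + argEnv k D m) (Tm.subst s k t) α,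
      d'.size ≤ d.size + argSize D := by
  induction d with
  | var x β =>
      intro k D hD
      rcases Nat.lt_trichotomy x k with h | h | h
      · -- x < k
        have hD0 : D = 0 := Multiset.map_eq_zero.mp
          (by rw [hD]; simp [if_neg (by omega : ¬ k = x)])
        subst hD0
        rw [show Tm.subst s k (.var x) = .var x by simp [Tm.subst, h]]
        have henv : (fun m => if m = x then ({β} : Multiset (Ty A)) else 0) =
            (fun m => dropEnv k (fun m' => if m' = x then ({β} : Multiset (Ty A)) else 0) m
              + argEnv k (0 : Multiset (AD A s)) m) := by
          funext m
          simp only [argEnv, Multiset.map_zero, Multiset.sum_zero, add_zero, dropEnv]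
          by_cases h1 : m < k
          · rw [if_pos h1]
          · rw [if_neg h1, if_neg (by omega : ¬ m + 1 = x), if_neg (by omega : ¬ m = x)]
        exact ⟨(Deriv.var x β).cast henv, by simp [Deriv.size, argSize]⟩
      · -- x = k
        subst h
        have hsing : D.map (fun x => x.1.2) = {β} := by rw [hD]; simp
        obtain ⟨y, hy, hfy⟩ := Multiset.map_eq_singleton.mp hsing
        obtain ⟨dl, hdl⟩ := Deriv.lift_deriv y.2 x 0
        rw [show Tm.subst s x (.var x) = Tm.lift x 0 s by
          simp [Tm.subst]]
        have henv : liftEnv x 0 y.1.1 =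
            (fun m => dropEnv x (fun m' => if m' = x then ({β} : Multiset (Ty A)) else 0) m
              + argEnv x D m) := by
          funext m
          subst hy
          simp only [argEnv, Multiset.map_singleton, Multiset.sum_singleton, dropEnv]
          by_cases h1 : m < x
          · rw [if_pos h1, if_neg (by omega : ¬ m = x)]
            rw [zero_add]
          · rw [if_neg h1, if_neg (by omega : ¬ m + 1 = x), zero_add]
        exact ⟨(dl.castTy hfy).cast henv, by simp [Deriv.size, argSize, hdl, hy]⟩
      · -- k < x
        have hD0 : D = 0 := Multiset.map_eq_zero.mp
          (by rw [hD]; simp [if_neg (by omega : ¬ k = x)])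
        subst hD0
        rw [show Tm.subst s k (.var x) = .var (x - 1) by
          simp [Tm.subst, if_neg (by omega : ¬ x < k), if_neg (by omega : ¬ x = k)]]
        have henv : (fun m => if m = x - 1 then ({β} : Multiset (Ty A)) else 0) =
            (fun m => dropEnv k (fun m' => if m' = x then ({β} : Multiset (Ty A)) else 0) m
              + argEnv k (0 : Multiset (AD A s)) m) := by
          funext m
          simp only [argEnv, Multiset.map_zero, Multiset.sum_zero, add_zero, dropEnv]
          by_cases h1 : m < k
          · rw [if_pos h1, if_neg (by omega : ¬ m = x - 1), if_neg (by omega : ¬ m = x)]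
          · rw [if_neg h1]
            by_cases h2 : m = x - 1
            · rw [if_pos h2, if_pos (by omega : m + 1 = x)]
            · rw [if_neg h2, if_neg (by omega : ¬ m + 1 = x)]
        exact ⟨(Deriv.var (x - 1) β).cast henv, by simp [Deriv.size, argSize]⟩
  | @abs Γ a t β h ih =>
      intro k D hD
      obtain ⟨d', hle⟩ := ih (k + 1) D hD
      have henv : (fun m => dropEnv (k+1) (consEnv (↑a) Γ) m + argEnv (k+1) D m) =
          consEnv (↑a) (fun m => dropEnv k Γ m + argEnv k D m) := by
        funext m
        cases m with
        | zero =>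
            show dropEnv (k+1) (consEnv (↑a) Γ) 0 + argEnv (k+1) D 0 =
              consEnv (↑a) (fun m => dropEnv k Γ m + argEnv k D m) 0
            simp only [dropEnv, if_pos (by omega : (0:ℕ) < k + 1), consEnv, argEnv]
            have : (D.map fun x => liftEnv (k+1) 0 x.1.1 0) = D.map fun _ => 0 := by
              apply Multiset.map_congr rfl
              intro z _
              simp [liftEnv]
            rw [this]
            simp
        | succ m =>
            show dropEnv (k+1) (consEnv (↑a) Γ) (m+1) + argEnv (k+1) D (m+1) =
              consEnv (↑a) (fun m => dropEnv k Γ m + argEnv k D m) (m+1)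
            have e1 : dropEnv (k+1) (consEnv (↑a) Γ) (m+1) = dropEnv k Γ m := by
              simp only [dropEnv]
              by_cases h1 : m < k
              · rw [if_pos (by omega : m + 1 < k + 1), if_pos h1]; rfl
              · rw [if_neg (by omega : ¬ m + 1 < k + 1), if_neg h1]; rfl
            have e2 : argEnv (k+1) D (m+1) = argEnv k D m := by
              simp only [argEnv]
              congr 1
              apply Multiset.map_congr rfl
              intro z _
              simp only [liftEnv]
              by_cases h1 : m < k
              · rw [if_neg (by omega), if_pos (by omega), if_neg (by omega), if_pos (by omega)]
              · rw [if_neg (by omega), if_neg (by omega), if_neg (by omega), if_neg (by omega)]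
                have harith : m + 1 - (k + 1) = m - k := by omega
                rw [harith]
            rw [e1, e2]
            rfl
      exact ⟨Deriv.abs (d'.cast henv), by simp only [Deriv.size, Deriv.size_cast]; omega⟩
  | @app Γ₀ Γs v u as β hv hlen hu ihv ihu =>
      intro k D hD
      obtain ⟨D₀, D₁, hDsum, hD0, hD1⟩ :=
        multiset_split2 _ (Γ₀ k) ((Γs.map fun Γ => Γ k).sum) D (by simpa only [sumEnv] using hD)
      obtain ⟨Ds, hDslen, hDssum, hDsget⟩ :=
        multiset_splitList _ (Γs.map fun Γ => Γ k) D₁ hD1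
      rw [List.length_map] at hDslen
      obtain ⟨dv, hdv⟩ := ihv k D₀ hD0
      choose du hdu using fun (i : ℕ) (hi : i < as.length) (hj : i < Γs.length) =>
        ihu i hi hj k (Ds.get ⟨i, by omega⟩) (by
          have := hDsget i (by simpa using hj) (by omega)
          simpa [List.get_eq_getElem, List.getElem_map] using this)
      set Γs' : List (Env A) :=
        List.zipWith (fun Γi Di => fun m => dropEnv k Γi m + argEnv k Di m) Γs Ds with hΓs'
      have hzl : Γs'.length = Γs.length := by
        simp [hΓs', List.length_zipWith]; omega
      have hlen' : Γs'.length = as.length := by rw [hzl]; exact hlen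
      have henv : sumEnv (fun m => dropEnv k Γ₀ m + argEnv k D₀ m) Γs' =
          (fun m => dropEnv k (sumEnv Γ₀ Γs) m + argEnv k D m) := by
        funext m
        have lhs : sumEnv (fun m => dropEnv k Γ₀ m + argEnv k D₀ m) Γs' m =
            (dropEnv k Γ₀ m + argEnv k D₀ m) +
              ((Γs.map fun Γi => dropEnv k Γi m).sum +
                (Ds.map fun Di => argEnv k Di m).sum) := by
          rw [sumEnv, zip_sum k Γs Ds hDslen.symm m]
        rw [lhs]
        have e1 : dropEnv k (sumEnv Γ₀ Γs) m =
            dropEnv k Γ₀ m + (Γs.map fun Γi => dropEnv k Γi m).sum := by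
          simp only [dropEnv]
          by_cases h1 : m < k
          · simp only [if_pos h1, sumEnv]
          · simp only [if_neg h1, sumEnv]
        have e2 : argEnv k D m = argEnv k D₀ m + (Ds.map fun Di => argEnv k Di m).sum := by
          rw [hDsum, ← hDssum]
          simp only [argEnv, Multiset.map_add, Multiset.sum_add]
          congr 1
          exact msum_map (fun x => liftEnv k 0 x.1.1 m) Ds
        rw [e1, e2]
        abel
      refine ⟨(Deriv.app dv hlen' (fun i hi hj =>
        (du i hi (by rw [← hzl]; exact hj)).cast (by
          simp only [hΓs', List.get_eq_getElem, List.getElem_zipWith]))).cast henv, ?_⟩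
      -- size bound
      erw [Deriv.size_cast]
      have hsz : (Deriv.app dv hlen' (fun i hi hj =>
          (du i hi (by rw [← hzl]; exact hj)).cast (by
            simp only [hΓs', List.get_eq_getElem, List.getElem_zipWith]))).size =
          dv.size + (∑ i : Fin as.length,
            (du i i.isLt (lt_of_lt_of_eq i.isLt hlen.symm)).size) + 1 := by
        simp only [Deriv.size, Deriv.size_cast, List.sum_ofFn]
      erw [hsz]
      have hd : (Deriv.app hv hlen hu).size =
          hv.size + (∑ i : Fin as.length,
            (hu i i.isLt (lt_of_lt_of_eq i.isLt hlen.symm)).size) + 1 := by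
        simp only [Deriv.size, List.sum_ofFn]
      rw [hd]
      have hargs : argSize D = argSize D₀ +
          (∑ i : Fin as.length, argSize (Ds.get ⟨i, by omega⟩)) := by
        rw [hDsum, ← hDssum]
        simp only [argSize, Multiset.map_add, Multiset.sum_add]
        congr 1
        rw [msum_map (fun x => x.2.size) Ds]
        rw [list_sum_fin (Ds.map fun Di => (Di.map fun x => x.2.size).sum)
          (show (Ds.map fun Di => (Di.map fun x => x.2.size).sum).length = as.length by
            rw [List.length_map]; omega)]
        apply Finset.sum_congr rfl
        intro i _
        simp only [List.get_eq_getElem, List.getElem_map, argSize]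
      rw [hargs]
      have hsum : (∑ i : Fin as.length,
          (du i i.isLt (lt_of_lt_of_eq i.isLt hlen.symm)).size) ≤
          (∑ i : Fin as.length,
            ((hu i i.isLt (lt_of_lt_of_eq i.isLt hlen.symm)).size +
              argSize (Ds.get ⟨i, by omega⟩))) := by
        apply Finset.sum_le_sum
        intro i _
        exact hdu i i.isLt _
      rw [Finset.sum_add_distrib] at hsum
      omega
end Aux4

section Aux5
set_option maxHeartbeats 1000000
variable {A : Type}

lemma liftEnv_zero (Δ : Env A) : liftEnv 0 0 Δ = Δ := by
  funext m
  simp [liftEnv]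

/-- Contracting the head β-redex strictly decreases derivation size. -/
lemma beta_deriv {Γ : Env A} {w u : Tm} {α : Ty A}
    (d : Deriv A Γ (.app (.lam w) u) α) :
    ∃ d' : Deriv A Γ (Tm.subst u 0 w) α, d'.size < d.size := by
  cases d with
  | @app Γ₀ Γs _ _ as β dv hlen du =>
    cases dv with
    | @abs _ a _ _ h =>
      -- a = as
      set D : Multiset (AD A u) :=
        ↑(List.ofFn fun i : Fin as.length =>
          (⟨(Γs.get ⟨i, lt_of_lt_of_eq i.isLt hlen.symm⟩, as.get i),
            du i i.isLt (lt_of_lt_of_eq i.isLt hlen.symm)⟩ : AD A u)) with hDdef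
      have hD : D.map (fun x => x.1.2) = consEnv (↑as) Γ₀ 0 := by
        show D.map (fun x => x.1.2) = (↑as : Multiset (Ty A))
        rw [hDdef, Multiset.map_coe, List.map_ofFn]
        show ↑(List.ofFn fun i : Fin as.length => as.get i) = (↑as : Multiset (Ty A))
        rw [List.ofFn_get]
      obtain ⟨d', hle⟩ := subst_deriv h 0 D hD
      have henv : (fun m => dropEnv 0 (consEnv (↑as) Γ₀) m + argEnv 0 D m) =
          sumEnv Γ₀ Γs := by
        funext m
        have e1 : dropEnv 0 (consEnv (↑as) Γ₀) m = Γ₀ m := by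
          simp [dropEnv, consEnv]
        have e2 : argEnv 0 D m = (Γs.map fun Γ => Γ m).sum := by
          simp only [argEnv, liftEnv_zero]
          rw [hDdef, Multiset.map_coe, List.map_ofFn, Multiset.sum_coe]
          rw [List.sum_ofFn]
          rw [list_sum_fin (Γs.map fun Γ => Γ m)
            (show (Γs.map fun Γ => Γ m).length = as.length by
              rw [List.length_map]; omega)]
          apply Finset.sum_congr rfl
          intro i _
          simp only [Function.comp, List.get_eq_getElem, List.getElem_map]
        rw [e1, e2]
        rfl
      have hsz : argSize D = ∑ i : Fin as.length,
          (du i i.isLt (lt_of_lt_of_eq i.isLt hlen.symm)).size := by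
        rw [argSize, hDdef, Multiset.map_coe, List.map_ofFn, Multiset.sum_coe,
          List.sum_ofFn]
        rfl
      refine ⟨d'.cast henv, ?_⟩
      rw [Deriv.size_cast]
      have hdsz : (Deriv.app (Deriv.abs h) hlen du).size =
          (h.size + 1) + (∑ i : Fin as.length,
            (du i i.isLt (lt_of_lt_of_eq i.isLt hlen.symm)).size) + 1 := by
        simp only [Deriv.size, List.sum_ofFn]
      rw [hdsz]
      rw [hsz] at hle
      omega

/-- Quantitative subject reduction. -/
lemma subject_reduction_deriv {t t' : Tm} (hb : Beta t t') :
    ∀ {Γ : Env A} {α : Ty A} (d : Deriv A Γ t α),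
      ∃ d' : Deriv A Γ t' α, d'.size ≤ d.size := by
  induction hb with
  | beta t u =>
      intro Γ α d
      obtain ⟨d', hlt⟩ := beta_deriv d
      exact ⟨d', le_of_lt hlt⟩
  | @appL a a' b hb ih =>
      intro Γ α d
      cases d with
      | @app Γ₀ Γs _ _ as β dv hlen du =>
          obtain ⟨dv', hdv'⟩ := ih dv
          refine ⟨Deriv.app dv' hlen du, ?_⟩
          simp only [Deriv.size]
          omega
  | @appR a b b' hb ih =>
      intro Γ α d
      cases d with
      | @app Γ₀ Γs _ _ as β dv hlen du =>
          choose du' hdu' using fun i hi hj => ih (du i hi hj)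
          refine ⟨Deriv.app dv hlen du', ?_⟩
          simp only [Deriv.size, List.sum_ofFn]
          have : (∑ i : Fin as.length,
              (du' i i.isLt (lt_of_lt_of_eq i.isLt hlen.symm)).size) ≤
              (∑ i : Fin as.length,
                (du i i.isLt (lt_of_lt_of_eq i.isLt hlen.symm)).size) :=
            Finset.sum_le_sum fun i _ => hdu' i i.isLt _
          omega
  | @lam a a' hb ih =>
      intro Γ α d
      cases d with
      | abs h =>
          obtain ⟨h', hh'⟩ := ih h
          refine ⟨Deriv.abs h', ?_⟩
          simp only [Deriv.size]
          omega

lemma subject_reduction_rtg {t t' : Tm} (hr : Relation.ReflTransGen Beta t t') :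
    ∀ {Γ : Env A} {α : Ty A} (d : Deriv A Γ t α),
      ∃ d' : Deriv A Γ t' α, d'.size ≤ d.size := by
  induction hr with
  | refl => intro Γ α d; exact ⟨d, le_rfl⟩
  | tail _ hstep ih =>
      intro Γ α d
      obtain ⟨d₁, h₁⟩ := ih d
      obtain ⟨d₂, h₂⟩ := subject_reduction_deriv hstep d₁
      exact ⟨d₂, le_trans h₂ h₁⟩

lemma rtg_appL {a a' : Tm} (b : Tm) (h : Relation.ReflTransGen Beta a a') :
    Relation.ReflTransGen Beta (.app a b) (.app a' b) :=
  Relation.ReflTransGen.lift (fun x => Tm.app x b) (fun _ _ hb => Beta.appL b hb) _ _ h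

lemma rtg_lam {a a' : Tm} (h : Relation.ReflTransGen Beta a a') :
    Relation.ReflTransGen Beta (.lam a) (.lam a') :=
  Relation.ReflTransGen.lift Tm.lam (fun _ _ hb => Beta.lam hb) _ _ h

lemma head_normalize : ∀ (n : ℕ) {Γ : Env A} {t : Tm} {α : Ty A}
    (d : Deriv A Γ t α), d.size ≤ n →
    ∃ t', Relation.ReflTransGen Beta t t' ∧ isHNF t' := by
  intro n
  induction n using Nat.strong_induction_on with
  | _ n ih =>
      intro Γ t α d hn
      cases d with
      | var x β => exact ⟨.var x, Relation.ReflTransGen.refl, trivial⟩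
      | @abs Γ a t β h =>
          have hsz : (Deriv.abs h).size = h.size + 1 := by simp only [Deriv.size]
          rw [hsz] at hn
          obtain ⟨t', hr, hh⟩ := ih h.size (by omega) h le_rfl
          exact ⟨.lam t', rtg_lam hr, hh⟩
      | @app Γ₀ Γs v u as β dv hlen du =>
          have hda : (Deriv.app dv hlen du).size = dv.size +
              (∑ i : Fin as.length,
                (du i i.isLt (lt_of_lt_of_eq i.isLt hlen.symm)).size) + 1 := by
            simp only [Deriv.size, List.sum_ofFn]
          rw [hda] at hn
          obtain ⟨v', hvr, hvh⟩ := ih dv.size (by omega) dv le_rfl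
          by_cases hl : ∃ w, v' = Tm.lam w
          · obtain ⟨w, rfl⟩ := hl
            obtain ⟨dv2, hdv2⟩ := subject_reduction_rtg hvr dv
            obtain ⟨d₃, hd₃⟩ := beta_deriv (Deriv.app dv2 hlen du)
            have hsz3 : (Deriv.app dv2 hlen du).size = dv2.size +
                (∑ i : Fin as.length,
                  (du i i.isLt (lt_of_lt_of_eq i.isLt hlen.symm)).size) + 1 := by
              simp only [Deriv.size, List.sum_ofFn]
            rw [hsz3] at hd₃
            obtain ⟨t', hr', hh'⟩ := ih d₃.size (by omega) d₃ le_rfl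
            refine ⟨t', ?_, hh'⟩
            exact Relation.ReflTransGen.trans (rtg_appL u hvr)
              (Relation.ReflTransGen.trans
                (Relation.ReflTransGen.single (Beta.beta w u)) hr')
          · have hhv : headVar v' := by
              cases v' with
              | var y => trivial
              | app a b => exact hvh
              | lam w => exact absurd ⟨w, rfl⟩ hl
            exact ⟨.app v' u, rtg_appL u hvr, hhv⟩
end Aux5

section Aux6
set_option maxHeartbeats 1000000
variable {A : Type}

lemma TypingR.cast {Γ Γ' : Env A} {t : Tm} {α : Ty A} (h : TypingR A Γ t α)
    (e : Γ = Γ') : TypingR A Γ' t α := e ▸ h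

lemma map_listsum {β γ : Type _} (f : β → γ) :
    ∀ (L : List (Multiset β)), (L.sum).map f = (L.map fun D => D.map f).sum := by
  intro L
  induction L with
  | nil => simp
  | cons D L ih => simp [Multiset.map_add, ih]

lemma mem_listsum {β : Type _} {p : β} :
    ∀ {L : List (Multiset β)}, p ∈ L.sum ↔ ∃ D ∈ L, p ∈ D := by
  intro L
  induction L with
  | nil => simp
  | cons D L ih => simp [Multiset.mem_add, ih]

/-- Anti-lifting: a typing of a lifted term comes from a typing of the term. -/
lemma anti_lift (δ : ℕ) : ∀ (s : Tm) (k : ℕ) {Γ' : Env A} {α : Ty A},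
    TypingR A Γ' (Tm.lift δ k s) α →
    ∃ Γ, TypingR A Γ s α ∧ Γ' = liftEnv δ k Γ := by
  intro s
  induction s with
  | var x =>
      intro k Γ' α h
      by_cases hx : x < k
      · rw [show Tm.lift δ k (.var x) = .var x by simp [Tm.lift, hx]] at h
        cases h
        exact ⟨singleEnv x α, TypingR.var x α, (liftEnv_single_lt δ α hx).symm⟩
      · rw [show Tm.lift δ k (.var x) = .var (x + δ) by simp [Tm.lift, hx]] at h
        cases h
        exact ⟨singleEnv x α, TypingR.var x α, (liftEnv_single_ge δ α hx).symm⟩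
  | app v u ihv ihu =>
      intro k Γ' α h
      cases h with
      | @app Γ₀ Γs _ _ as β hv hlen hu =>
          obtain ⟨Γv, hΓv, hveq⟩ := ihv k hv
          choose Γu hΓu hΓueq using
            fun (i : ℕ) (hi : i < as.length) (hj : i < Γs.length) => ihu k (hu i hi hj)
          refine ⟨sumEnv Γv (List.ofFn fun i : Fin as.length =>
            Γu i i.isLt (lt_of_lt_of_eq i.isLt hlen.symm)), ?_, ?_⟩
          · refine TypingR.app hΓv (by simp) (fun i hi hj => ?_)
            exact (hΓu i hi (lt_of_lt_of_eq hi hlen.symm)).cast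
              (by simp [List.get_eq_getElem, List.getElem_ofFn])
          · have hlist : Γs = List.map (liftEnv δ k) (List.ofFn fun i : Fin as.length =>
                Γu i i.isLt (lt_of_lt_of_eq i.isLt hlen.symm)) := by
              apply List.ext_get (by simp [hlen])
              intro i h1 h2
              simp only [List.get_eq_getElem, List.getElem_map, List.getElem_ofFn]
              exact hΓueq i (by simpa using h2) h1
            rw [liftEnv_sumEnv, ← hveq, ← hlist]
  | lam b ihb =>
      intro k Γ' α h
      cases h with
      | @abs _ a _ β hb =>
          obtain ⟨Γ₁, hΓ₁, heq⟩ := ihb (k+1) hb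
          have h0 : Γ₁ 0 = (↑a : Multiset (Ty A)) := by
            have := congrFun heq 0
            simp only [liftEnv, consEnv] at this
            rw [if_pos (by omega : (0:ℕ) < k + 1)] at this
            exact this.symm
          refine ⟨fun m => Γ₁ (m+1), TypingR.abs (hΓ₁.cast ?_), ?_⟩
          · funext m
            cases m with
            | zero => exact h0
            | succ m => rfl
          · funext m
            have := congrFun heq (m+1)
            simp only [consEnv] at this
            rw [this]
            simp only [liftEnv]
            by_cases h1 : m < k
            · rw [if_pos (by omega : m + 1 < k + 1), if_pos h1]
            · rw [if_neg (by omega : ¬ m + 1 < k + 1), if_neg h1]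
              by_cases h2 : m < k + δ
              · rw [if_pos (by omega : m + 1 < k + 1 + δ), if_pos h2]
              · rw [if_neg (by omega : ¬ m + 1 < k + 1 + δ), if_neg h2]
                have : m + 1 - δ = (m - δ) + 1 := by omega
                rw [this]
end Aux6

section Aux7
set_option maxHeartbeats 1000000
variable {A : Type}

def liftedSum (k : ℕ) (D : Multiset (Env A × Ty A)) : Env A :=
  fun m => (D.map fun p => liftEnv k 0 p.1 m).sum

lemma liftedSum_succ (k : ℕ) (D : Multiset (Env A × Ty A)) (m : ℕ) :
    liftedSum (k+1) D (m+1) = liftedSum k D m := by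
  simp only [liftedSum]
  congr 1
  apply Multiset.map_congr rfl
  intro p _
  simp only [liftEnv]
  by_cases h1 : m < k
  · rw [if_neg (by omega), if_pos (by omega), if_neg (by omega), if_pos (by omega)]
  · rw [if_neg (by omega), if_neg (by omega), if_neg (by omega), if_neg (by omega)]
    have e : m + 1 - (k+1) = m - k := by omega
    rw [e]

lemma liftedSum_zero_succ (k : ℕ) (D : Multiset (Env A × Ty A)) :
    liftedSum (k+1) D 0 = 0 := by
  simp only [liftedSum]
  have e : (D.map fun p => liftEnv (k+1) 0 p.1 0) = D.map fun _ => 0 :=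
    Multiset.map_congr rfl (fun p _ => by simp [liftEnv])
  rw [e]
  simp

/-- Anti-substitution. -/
lemma anti_subst (s : Tm) : ∀ (t : Tm) (k : ℕ) {Γ' : Env A} {α : Ty A},
    TypingR A Γ' (Tm.subst s k t) α →
    ∃ (D : Multiset (Env A × Ty A)) (Γ : Env A),
      TypingR A (insEnv k (D.map Prod.snd) Γ) t α ∧
      (∀ p ∈ D, TypingR A p.1 s p.2) ∧
      Γ' = fun m => Γ m + liftedSum k D m := by
  intro t
  induction t with
  | var x =>
      intro k Γ' α h
      rcases Nat.lt_trichotomy x k with hx | hx | hx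
      · rw [show Tm.subst s k (.var x) = .var x by simp [Tm.subst, hx]] at h
        cases h
        refine ⟨0, singleEnv x α, (TypingR.var x α).cast ?_, by simp, ?_⟩
        · funext m
          simp only [insEnv, singleEnv, Multiset.map_zero]
          by_cases h1 : m < k
          · rw [if_pos h1]
          · by_cases h2 : m = k
            · rw [if_neg (by omega : ¬ m = x), if_neg h1, if_pos h2]
            · rw [if_neg (by omega : ¬ m = x), if_neg h1, if_neg h2,
                if_neg (by omega : ¬ m - 1 = x)]
        · funext m
          simp [liftedSum, singleEnv]
      · subst hx
        rw [show Tm.subst s x (.var x) = Tm.lift x 0 s by simp [Tm.subst]] at h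
        obtain ⟨Δ, hΔ, hΓ'⟩ := anti_lift x s 0 h
        refine ⟨{(Δ, α)}, fun _ => 0, (TypingR.var x α).cast ?_, by simpa, ?_⟩
        · funext m
          simp only [insEnv, Multiset.map_singleton]
          by_cases h1 : m < x
          · rw [if_neg (by omega : ¬ m = x), if_pos h1]
          · by_cases h2 : m = x
            · rw [if_pos h2, if_neg h1]
            · rw [if_neg h2, if_neg h1]
        · funext m
          rw [hΓ']
          simp [liftedSum, liftEnv]
      · rw [show Tm.subst s k (.var x) = .var (x-1) by
          simp [Tm.subst, if_neg (by omega : ¬ x < k), if_neg (by omega : ¬ x = k)]] at h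
        cases h
        refine ⟨0, singleEnv (x-1) α, (TypingR.var x α).cast ?_, by simp, ?_⟩
        · funext m
          simp only [insEnv, singleEnv, Multiset.map_zero]
          by_cases h1 : m < k
          · rw [if_neg (by omega : ¬ m = x), if_pos h1, if_neg (by omega : ¬ m = x - 1)]
          · by_cases h2 : m = k
            · rw [if_neg (by omega : ¬ m = x), if_neg h1, if_pos h2]
            · by_cases h3 : m = x
              · rw [if_pos h3, if_neg h1, if_neg h2, if_pos (by omega : m - 1 = x - 1)]
              · rw [if_neg h3, if_neg h1, if_neg h2, if_neg (by omega : ¬ m - 1 = x - 1)]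
        · funext m
          simp [liftedSum, singleEnv]
  | lam b ihb =>
      intro k Γ' α h
      cases h with
      | @abs _ a _ β hb =>
          obtain ⟨D, Γb, htb, hargs, heq⟩ := ihb (k+1) hb
          have h0 : Γb 0 = (↑a : Multiset (Ty A)) := by
            have := congrFun heq 0
            rw [liftedSum_zero_succ] at this
            simpa [consEnv] using this.symm
          refine ⟨D, fun m => Γb (m+1), TypingR.abs (htb.cast ?_), hargs, ?_⟩
          · funext m
            cases m with
            | zero =>
                show insEnv (k+1) (D.map Prod.snd) Γb 0 = (↑a : Multiset (Ty A))
                simp only [insEnv]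
                rw [if_pos (by omega : (0:ℕ) < k+1)]
                exact h0
            | succ m =>
                show insEnv (k+1) (D.map Prod.snd) Γb (m+1) =
                  insEnv k (D.map Prod.snd) (fun m => Γb (m+1)) m
                simp only [insEnv]
                by_cases h1 : m < k
                · rw [if_pos (by omega : m+1 < k+1), if_pos h1]
                · rw [if_neg (by omega : ¬ m+1 < k+1), if_neg h1]
                  by_cases h2 : m = k
                  · rw [if_pos (by omega : m+1 = k+1), if_pos h2]
                  · rw [if_neg (by omega : ¬ m+1 = k+1), if_neg h2]
                    show Γb m = Γb (m - 1 + 1)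
                    have e : m - 1 + 1 = m := by omega
                    rw [e]
          · funext m
            have := congrFun heq (m+1)
            simp only [consEnv] at this
            rw [this, liftedSum_succ]
  | app v u ihv ihu =>
      intro k Γ' α h
      cases h with
      | @app Γ₀ Γs _ _ as β hv hlen hu =>
          obtain ⟨Dv, Γv, htv, hav, hev⟩ := ihv k hv
          choose Du Γu htu hau heu using
            fun (i : ℕ) (hi : i < as.length) (hj : i < Γs.length) => ihu k (hu i hi hj)
          set Lu : List (Multiset (Env A × Ty A)) := List.ofFn fun i : Fin as.length =>
            Du i i.isLt (lt_of_lt_of_eq i.isLt hlen.symm) with hLu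
          set LG : List (Env A) := List.ofFn fun i : Fin as.length =>
            Γu i i.isLt (lt_of_lt_of_eq i.isLt hlen.symm) with hLG
          refine ⟨Dv + Lu.sum, sumEnv Γv LG, ?_, ?_, ?_⟩
          · have henv : sumEnv (insEnv k (Dv.map Prod.snd) Γv)
                (List.ofFn fun i : Fin as.length =>
                  insEnv k ((Du i i.isLt (lt_of_lt_of_eq i.isLt hlen.symm)).map Prod.snd)
                    (Γu i i.isLt (lt_of_lt_of_eq i.isLt hlen.symm))) =
                insEnv k ((Dv + Lu.sum).map Prod.snd) (sumEnv Γv LG) := by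
              funext m
              by_cases h1 : m < k
              · simp only [sumEnv, insEnv, if_pos h1, hLG, List.map_ofFn, List.sum_ofFn,
                  Function.comp_def]
              · by_cases h2 : m = k
                · have eR : ((Dv + Lu.sum).map Prod.snd) = (Dv.map Prod.snd) +
                      ∑ i : Fin as.length,
                        ((Du i i.isLt (lt_of_lt_of_eq i.isLt hlen.symm)).map Prod.snd) := by
                    rw [Multiset.map_add, map_listsum Prod.snd Lu, hLu, List.map_ofFn,
                      List.sum_ofFn]
                    rfl
                  simp only [sumEnv, insEnv, if_neg h1, if_pos h2, eR, List.map_ofFn,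
                    List.sum_ofFn, Function.comp_def]
                · simp only [sumEnv, insEnv, if_neg h1, if_neg h2, hLG, List.map_ofFn,
                    List.sum_ofFn, Function.comp_def]
            exact (TypingR.app htv (by simp) (fun i hi hj =>
              (htu i hi (lt_of_lt_of_eq hi hlen.symm)).cast
                (by simp [List.get_eq_getElem, List.getElem_ofFn]))).cast henv
          · intro p hp
            rcases Multiset.mem_add.mp hp with hp | hp
            · exact hav p hp
            · obtain ⟨DL, hDL, hpDL⟩ := mem_listsum.mp hp
              rw [hLu] at hDL
              obtain ⟨i, hiEq⟩ := List.mem_ofFn.mp hDL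
              rw [← hiEq] at hpDL
              exact hau i i.isLt (lt_of_lt_of_eq i.isLt hlen.symm) p hpDL
          · funext m
            have eG0 : Γ₀ m = Γv m + liftedSum k Dv m := by rw [hev]
            have eGs : (Γs.map fun Γ => Γ m).sum =
                ∑ i : Fin as.length,
                  (Γu i i.isLt (lt_of_lt_of_eq i.isLt hlen.symm) m +
                    liftedSum k (Du i i.isLt (lt_of_lt_of_eq i.isLt hlen.symm)) m) := by
              rw [list_sum_fin (Γs.map fun Γ => Γ m)
                (show (Γs.map fun Γ => Γ m).length = as.length by
                  rw [List.length_map]; omega)]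
              apply Finset.sum_congr rfl
              intro i _
              have hh := heu i i.isLt (lt_of_lt_of_eq i.isLt hlen.symm)
              simp only [List.get_eq_getElem, List.getElem_map]
              exact congrFun hh m
            have eS : liftedSum k (Dv + Lu.sum) m = liftedSum k Dv m +
                ∑ i : Fin as.length,
                  liftedSum k (Du i i.isLt (lt_of_lt_of_eq i.isLt hlen.symm)) m := by
              simp only [liftedSum, Multiset.map_add, Multiset.sum_add]
              congr 1
              rw [msum_map (fun p => liftEnv k 0 p.1 m) Lu]
              rw [hLu, List.map_ofFn, List.sum_ofFn]
              rfl
            have eLG : sumEnv Γv LG m = Γv m +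
                ∑ i : Fin as.length,
                  Γu i i.isLt (lt_of_lt_of_eq i.isLt hlen.symm) m := by
              simp only [sumEnv, hLG, List.map_ofFn, List.sum_ofFn, Function.comp_def]
            show sumEnv Γ₀ Γs m = _
            simp only [sumEnv] at eLG ⊢
            rw [eG0, eGs, eLG, eS, Finset.sum_add_distrib]
            abel
end Aux7

section Aux8
set_option maxHeartbeats 1000000
variable {A : Type}

/-- Subject expansion. -/
lemma subject_expansion {t t' : Tm} (hb : Beta t t') :
    ∀ {Γ : Env A} {α : Ty A}, TypingR A Γ t' α → TypingR A Γ t α := by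
  induction hb with
  | beta w u =>
      intro Γ α h
      obtain ⟨D, Γ₁, ht, hargs, heq⟩ := anti_subst u w 0 h
      set L := D.toList with hLdef
      have hLD : (↑L : Multiset (Env A × Ty A)) = D := Multiset.coe_toList D
      have hc : insEnv 0 (D.map Prod.snd) Γ₁ =
          consEnv (↑(L.map Prod.snd)) Γ₁ := by
        funext m
        cases m with
        | zero =>
            show insEnv 0 (D.map Prod.snd) Γ₁ 0 = ↑(L.map Prod.snd)
            rw [← hLD, Multiset.map_coe]
            simp [insEnv]
        | succ m => simp [insEnv, consEnv]
      have habs : TypingR A Γ₁ (.lam w) (.arrow (L.map Prod.snd) α) :=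
        .abs (ht.cast hc)
      have hus : ∀ i (hi : i < (L.map Prod.snd).length)
          (hj : i < (L.map Prod.fst).length),
          TypingR A ((L.map Prod.fst).get ⟨i, hj⟩) u ((L.map Prod.snd).get ⟨i, hi⟩) := by
        intro i hi hj
        have hmem : L.get ⟨i, by simpa using hi⟩ ∈ D := by
          rw [← hLD]
          exact Multiset.mem_coe.mpr (List.get_mem L _)
        have := hargs _ hmem
        simpa [List.get_eq_getElem, List.getElem_map] using this
      have henv : sumEnv Γ₁ (L.map Prod.fst) = Γ := by
        funext m
        rw [heq]
        show Γ₁ m + ((L.map Prod.fst).map (fun Γ => Γ m)).sum =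
          Γ₁ m + liftedSum 0 D m
        congr 1
        rw [← hLD]
        simp only [liftedSum, Multiset.map_coe, Multiset.sum_coe, List.map_map,
          liftEnv_zero]
        rfl
      exact (TypingR.app habs (by simp) hus).cast henv
  | appL b hb ih =>
      intro Γ α h
      cases h with
      | app hv hlen hu => exact .app (ih hv) hlen hu
  | appR a hb ih =>
      intro Γ α h
      cases h with
      | app hv hlen hu => exact .app hv hlen (fun i hi hj => ih (hu i hi hj))
  | lam hb ih =>
      intro Γ α h
      cases h with
      | abs hb' => exact .abs (ih hb')

lemma subject_expansion_rtg {t t' : Tm} (hr : Relation.ReflTransGen Beta t t')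
    {Γ : Env A} {α : Ty A} (h : TypingR A Γ t' α) : TypingR A Γ t α := by
  induction hr using Relation.ReflTransGen.head_induction_on with
  | refl => exact h
  | head hstep _ ih => exact subject_expansion hstep ih

lemma headVar_typable : ∀ (t : Tm), headVar t → ∀ α : Ty A, ∃ Γ, TypingR A Γ t α := by
  intro t
  induction t with
  | var x => exact fun _ α => ⟨_, .var x α⟩
  | app a b iha _ =>
      intro h α
      obtain ⟨Γ, hΓ⟩ := iha h (.arrow [] α)
      refine ⟨Γ, ?_⟩
      have happ := TypingR.app (v := a) (u := b) hΓ (Γs := []) rfl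
        (fun i hi hj => absurd hi (by simp))
      exact happ.cast (by funext m; simp [sumEnv])
  | lam t ih => exact fun h => False.elim h

lemma hnf_typable [Nonempty A] : ∀ (t : Tm), isHNF t →
    ∃ (Γ : Env A) (α : Ty A), TypingR A Γ t α := by
  intro t
  induction t with
  | var x => exact fun _ => ⟨_, .atom (Classical.arbitrary A), .var x _⟩
  | app a b iha ihb =>
      intro h
      obtain ⟨Γ, hΓ⟩ := headVar_typable (Tm.app a b) h (.atom (Classical.arbitrary A))
      exact ⟨Γ, _, hΓ⟩
  | lam t ih =>
      intro h
      obtain ⟨Γ, α, hΓ⟩ := ih h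
      refine ⟨fun m => Γ (m+1), .arrow (Γ 0).toList α, .abs (hΓ.cast ?_)⟩
      funext m
      cases m with
      | zero =>
          show Γ 0 = (↑(Γ 0).toList : Multiset (Ty A))
          rw [Multiset.coe_toList]
      | succ m => rfl
end Aux8


/-- a λ-term is typable in System R if, and only if, it is
head-normalizable (it β-reduces to a head normal form, equivalently its head
reduction terminates). -/
theorem R_typable_iff_head_normalizable {A : Type} [Countable A] [Nonempty A] (t : Tm) :
    (∃ (Γ : Env A) (α : Ty A), TypingR A Γ t α) ↔
      (∃ t', Relation.ReflTransGen Beta t t' ∧ isHNF t') := by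
  constructor
  · rintro ⟨Γ, α, h⟩
    obtain ⟨d⟩ := deriv_of_typing h
    exact head_normalize d.size d le_rfl
  · rintro ⟨t', hr, hh⟩
    obtain ⟨Γ, α, h⟩ := hnf_typable (A := A) t' hh
    exact ⟨Γ, α, subject_expansion_rtg hr h⟩
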